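/- (ε-ALN robustness for symmetric noise, deterministic core inequality) Let l be a-linear-odd satisfying l(x) - l(-x) = 2ax, let p ∈ [0,1/2), B > 0, and let R : ℝ^d → ℝ be any function of the form R(θ) = (1/m)∑_i l(y_i⟨θ,x_i⟩) with minimizer θ* over {θ : ‖θ‖₂ ≤ B}, and define the noisy risk R̃(θ) = (1-p)R(θ) + p·(1/m)∑_i l(-y_i⟨θ,x_i⟩). Then for all θ with ‖θ‖₂ ≤ B: R̃(θ*) - R̃(θ) ≤ 4|a|Bp‖μ‖₂, where μ = (1/m)∑ y_i x_i. -/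

import Mathlib

theorem aln_robustness_core {d m : ℕ} (hm : 1 ≤ m)
    (l : ℝ → ℝ) (a : ℝ) (hl : ∀ x, l x - l (-x) = 2 * a * x)
    (p B : ℝ) (hp : 0 ≤ p) (hp' : p < 1/2) (hB : 0 < B)
    (x : Fin m → EuclideanSpace ℝ (Fin d)) (y : Fin m → ℝ)
    (hy : ∀ i, y i = 1 ∨ y i = -1)
    (R Rt : EuclideanSpace ℝ (Fin d) → ℝ)
    (hR : ∀ θ, R θ = (1 / (m : ℝ)) * ∑ i, l (y i * (inner ℝ θ (x i) : ℝ)))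
    (hRt : ∀ θ, Rt θ = (1 - p) * R θ
        + p * ((1 / (m : ℝ)) * ∑ i, l (-(y i * (inner ℝ θ (x i) : ℝ)))))
    (θs : EuclideanSpace ℝ (Fin d)) (hθs : ‖θs‖ ≤ B)
    (hmin : ∀ θ, ‖θ‖ ≤ B → R θs ≤ R θ)
    (μ : EuclideanSpace ℝ (Fin d))
    (hμ : μ = (m : ℝ)⁻¹ • ∑ i, y i • x i) :
    ∀ θ, ‖θ‖ ≤ B → Rt θs - Rt θ ≤ 4 * |a| * B * p * ‖μ‖ := by
  intro θ hθ
  have hinner : ∀ φ : EuclideanSpace ℝ (Fin d),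
      (inner ℝ φ μ : ℝ) = (1 / (m : ℝ)) * ∑ i, y i * (inner ℝ φ (x i) : ℝ) := by
    intro φ
    rw [hμ, real_inner_smul_right, inner_sum]
    simp [real_inner_smul_right, one_div, Finset.mul_sum, mul_left_comm]
  have key : ∀ φ : EuclideanSpace ℝ (Fin d),
      Rt φ = R φ - 2 * a * p * (inner ℝ φ μ : ℝ) := by
    intro φ
    have h1 : ∀ i : Fin m, l (-(y i * (inner ℝ φ (x i) : ℝ)))
        = l (y i * (inner ℝ φ (x i) : ℝ)) - 2 * a * (y i * (inner ℝ φ (x i) : ℝ)) := by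
      intro i
      have := hl (y i * (inner ℝ φ (x i) : ℝ))
      linarith
    rw [hRt, hinner, hR]
    rw [Finset.sum_congr rfl (fun i _ => h1 i), Finset.sum_sub_distrib,
      ← Finset.mul_sum]
    ring
  have h2 : Rt θs - Rt θ ≤ 2 * a * p * ((inner ℝ θ μ : ℝ) - (inner ℝ θs μ : ℝ)) := by
    rw [key θs, key θ]
    have := hmin θ hθ
    nlinarith []
  have h3 : 2 * a * p * ((inner ℝ θ μ : ℝ) - (inner ℝ θs μ : ℝ))
      = 2 * p * (a * (inner ℝ (θ - θs) μ : ℝ)) := by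
    rw [inner_sub_left]; ring
  have h4 : a * (inner ℝ (θ - θs) μ : ℝ) ≤ |a| * (‖θ - θs‖ * ‖μ‖) := by
    calc a * (inner ℝ (θ - θs) μ : ℝ) ≤ |a * (inner ℝ (θ - θs) μ : ℝ)| := le_abs_self _
      _ = |a| * |(inner ℝ (θ - θs) μ : ℝ)| := abs_mul _ _
      _ ≤ |a| * (‖θ - θs‖ * ‖μ‖) := by
          gcongr
          exact abs_real_inner_le_norm _ _
  have h5 : ‖θ - θs‖ ≤ 2 * B := by
    calc ‖θ - θs‖ ≤ ‖θ‖ + ‖θs‖ := norm_sub_le _ _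
      _ ≤ 2 * B := by linarith
  have h6 : |a| * (‖θ - θs‖ * ‖μ‖) ≤ |a| * (2 * B * ‖μ‖) := by
    exact mul_le_mul_of_nonneg_left (mul_le_mul_of_nonneg_right h5 (norm_nonneg μ)) (abs_nonneg a)
  calc Rt θs - Rt θ ≤ 2 * p * (a * (inner ℝ (θ - θs) μ : ℝ)) := by rw [← h3]; exact h2
    _ ≤ 2 * p * (|a| * (2 * B * ‖μ‖)) := by
        have := h4.trans h6
        nlinarith [abs_nonneg a, norm_nonneg μ]
    _ = 4 * |a| * B * p * ‖μ‖ := by ring
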